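/- In the polynomial ring P_n, the identity ∂_m ∂_{m-1} ⋯ ∂_{m-r}(x_{m-r}^{r+1} x_{m-r+1}^{r} ⋯ x_m^1) = (−1)^{r+1} x_{m-r}^{r} x_{m-r+1}^{r-1} ⋯ x_{m-1}^1 holds for 1 ≤ m−r ≤ m < n, where ∂_i are Demazure operators. -/

import Mathlib

open MvPolynomial

/-- `IsDemazure D` says that `D i` is the Demazure operator `∂_{i+1}` (so `D i` involves the
variables of indices `i` and `i+1`, i.e. `x_{i+1}` and `x_{i+2}` in one-based notation),
characterized by `D i P * (x_{i+2} - x_{i+1}) = P - s_{i+1}(P)`. -/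
def IsDemazure {K : Type} [Field K] {n : ℕ}
    (D : Fin (n - 1) → MvPolynomial (Fin n) K → MvPolynomial (Fin n) K) : Prop :=
  ∀ (i : Fin (n - 1)) (P : MvPolynomial (Fin n) K),
    D i P * (X (⟨i.val + 1, by have := i.isLt; omega⟩ : Fin n) -
        X (⟨i.val, by have := i.isLt; omega⟩ : Fin n)) =
      P - rename (Equiv.swap (⟨i.val, by have := i.isLt; omega⟩ : Fin n)
        (⟨i.val + 1, by have := i.isLt; omega⟩ : Fin n)) P

lemma demazure_unique {K : Type} [Field K] {n : ℕ}
    {D : Fin (n - 1) → MvPolynomial (Fin n) K → MvPolynomial (Fin n) K}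
    (hD : IsDemazure D) (i : Fin (n - 1)) (P Q : MvPolynomial (Fin n) K)
    (h : Q * (X (⟨i.val + 1, by have := i.isLt; omega⟩ : Fin n) -
        X (⟨i.val, by have := i.isLt; omega⟩ : Fin n)) =
      P - rename (Equiv.swap (⟨i.val, by have := i.isLt; omega⟩ : Fin n)
        (⟨i.val + 1, by have := i.isLt; omega⟩ : Fin n)) P) :
    D i P = Q := by
  have h2 := hD i P
  have hne : (X (⟨i.val + 1, by have := i.isLt; omega⟩ : Fin n) -
      X (⟨i.val, by have := i.isLt; omega⟩ : Fin n) : MvPolynomial (Fin n) K) ≠ 0 := by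
    rw [sub_ne_zero]
    intro hXX
    have := MvPolynomial.X_injective hXX
    simp [Fin.ext_iff] at this
  exact mul_right_cancel₀ hne (h2.trans h.symm)

lemma demazure_step {K : Type} [Field K] {n : ℕ}
    {D : Fin (n - 1) → MvPolynomial (Fin n) K → MvPolynomial (Fin n) K}
    (hD : IsDemazure D) (i : Fin (n - 1)) (e : ℕ) (c : MvPolynomial (Fin n) K)
    (hc : rename (Equiv.swap (⟨i.val, by have := i.isLt; omega⟩ : Fin n)
        (⟨i.val + 1, by have := i.isLt; omega⟩ : Fin n)) c = c) :
    D i (c * X (⟨i.val, by have := i.isLt; omega⟩ : Fin n) ^ (e + 1)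
          * X (⟨i.val + 1, by have := i.isLt; omega⟩ : Fin n) ^ e) =
      -(c * X (⟨i.val, by have := i.isLt; omega⟩ : Fin n) ^ e
          * X (⟨i.val + 1, by have := i.isLt; omega⟩ : Fin n) ^ e) := by
  apply demazure_unique hD
  set x : Fin n := ⟨i.val, by have := i.isLt; omega⟩
  set y : Fin n := ⟨i.val + 1, by have := i.isLt; omega⟩
  rw [map_mul, map_mul, map_pow, map_pow, rename_X, rename_X, hc,
    Equiv.swap_apply_left, Equiv.swap_apply_right]
  ring

lemma X_pow_congr {K : Type} [Field K] {n : ℕ} {i j : Fin n} {p q : ℕ}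
    (h1 : i.val = j.val) (h2 : p = q) :
    (X i : MvPolynomial (Fin n) K) ^ p = X j ^ q := by
  rw [Fin.ext h1, h2]

lemma prod_shift {K : Type} [Field K] {n k b e : ℕ} (h : b + k < n) :
    (∏ t : Fin (k + 1),
      (X (⟨b + t.val, by have := t.isLt; omega⟩ : Fin n) : MvPolynomial (Fin n) K) ^ (e - t.val))
      = X (⟨b, by omega⟩ : Fin n) ^ e *
        ∏ t : Fin k,
          (X (⟨b + 1 + t.val, by have := t.isLt; omega⟩ : Fin n) : MvPolynomial (Fin n) K)
            ^ (e - 1 - t.val) := by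
  rw [Fin.prod_univ_succ]
  exact congrArg₂ (· * ·) (X_pow_congr (by simp) (by simp))
    (Finset.prod_congr rfl fun t _ => X_pow_congr (by simp; omega) (by simp [Fin.val_succ]; omega))

lemma demazure_aux {K : Type} [Field K] {n : ℕ}
    {D : Fin (n - 1) → MvPolynomial (Fin n) K → MvPolynomial (Fin n) K}
    (hD : IsDemazure D) :
    ∀ (r a : ℕ) (h : a + r + 1 < n) (c : MvPolynomial (Fin n) K),
      (∀ i j : Fin n, a ≤ i.val → a ≤ j.val → rename (Equiv.swap i j) c = c) →
    (List.finRange (r + 1)).foldl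
      (fun P t => D (⟨a + t.val, by have := t.isLt; omega⟩ : Fin (n - 1)) P)
      (c * ∏ t : Fin (r + 1),
        (X (⟨a + t.val, by have := t.isLt; omega⟩ : Fin n) : MvPolynomial (Fin n) K)
          ^ (r + 1 - t.val)) =
    (-1 : MvPolynomial (Fin n) K) ^ (r + 1) * c *
      ∏ t : Fin (r + 1),
        (X (⟨a + t.val, by have := t.isLt; omega⟩ : Fin n) : MvPolynomial (Fin n) K)
          ^ (r - t.val) := by
  intro r
  induction r with
  | zero =>
    intro a h c hc
    simp only [List.finRange_succ, List.finRange_zero, List.map_nil, List.foldl_cons,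
      List.foldl_nil]
    have key := demazure_step hD ⟨a, by omega⟩ 0 c (hc _ _ (le_refl a) (by simp))
    simp only [pow_zero, mul_one, pow_one] at key
    have p1 : (∏ t : Fin (0 + 1),
        (X (⟨a + t.val, by have := t.isLt; omega⟩ : Fin n) : MvPolynomial (Fin n) K)
          ^ (0 + 1 - t.val)) = X (⟨a, by omega⟩ : Fin n) ^ (0 + 1) := by
      rw [Fin.prod_univ_one]
      exact X_pow_congr (by simp) (by simp)
    have p2 : (∏ t : Fin (0 + 1),
        (X (⟨a + t.val, by have := t.isLt; omega⟩ : Fin n) : MvPolynomial (Fin n) K)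
          ^ (0 - t.val)) = 1 := by
      rw [Fin.prod_univ_one]
      simp
    have hidx : D (⟨a + (0 : Fin (0 + 1)).val, by omega⟩ : Fin (n - 1))
        = D (⟨a, by omega⟩ : Fin (n - 1)) := by
      congr 1 <;> exact Fin.ext (by simp)
    rw [p1, p2, hidx, key]
    ring
  | succ r ih =>
    intro a h c hc
    rw [List.finRange_succ, List.foldl_cons, List.foldl_map]
    have e1 : (∏ t : Fin (r + 1 + 1),
        (X (⟨a + t.val, by have := t.isLt; omega⟩ : Fin n) : MvPolynomial (Fin n) K)
          ^ (r + 1 + 1 - t.val))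
        = X (⟨a, by omega⟩ : Fin n) ^ (r + 2) *
          ∏ t : Fin (r + 1),
            (X (⟨a + 1 + t.val, by have := t.isLt; omega⟩ : Fin n) : MvPolynomial (Fin n) K)
              ^ (r + 1 - t.val) := by
      have := prod_shift (K := K) (n := n) (k := r + 1) (b := a) (e := r + 2) (by omega)
      convert this using 4 <;> omega
    have e2 : (∏ t : Fin (r + 1),
        (X (⟨a + 1 + t.val, by have := t.isLt; omega⟩ : Fin n) : MvPolynomial (Fin n) K)
          ^ (r + 1 - t.val))
        = X (⟨a + 1, by omega⟩ : Fin n) ^ (r + 1) *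
          ∏ t : Fin r,
            (X (⟨a + 2 + t.val, by have := t.isLt; omega⟩ : Fin n) : MvPolynomial (Fin n) K)
              ^ (r - t.val) := by
      have := prod_shift (K := K) (n := n) (k := r) (b := a + 1) (e := r + 1) (by omega)
      convert this using 4 <;> omega
    set R : MvPolynomial (Fin n) K :=
      ∏ t : Fin r,
        (X (⟨a + 2 + t.val, by have := t.isLt; omega⟩ : Fin n) : MvPolynomial (Fin n) K)
          ^ (r - t.val) with hR
    have hcR : rename (Equiv.swap (⟨a, by omega⟩ : Fin n) (⟨a + 1, by omega⟩ : Fin n)) (c * R)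
        = c * R := by
      rw [map_mul, hc _ _ (le_refl a) (by simp)]
      congr 1
      rw [hR, map_prod]
      refine Finset.prod_congr rfl fun t _ => ?_
      rw [map_pow, rename_X, Equiv.swap_apply_of_ne_of_ne]
      · simp [Fin.ext_iff]; omega
      · simp [Fin.ext_iff]; omega
    have key := demazure_step hD ⟨a, by omega⟩ (r + 1) (c * R) hcR
    have hfirst : D (⟨a + (0 : Fin (r + 1 + 1)).val, by omega⟩ : Fin (n - 1))
        (c * ∏ t : Fin (r + 1 + 1),
          (X (⟨a + t.val, by have := t.isLt; omega⟩ : Fin n) : MvPolynomial (Fin n) K)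
            ^ (r + 1 + 1 - t.val))
        = -(c * X (⟨a, by omega⟩ : Fin n) ^ (r + 1)) *
          ∏ t : Fin (r + 1),
            (X (⟨a + 1 + t.val, by have := t.isLt; omega⟩ : Fin n) : MvPolynomial (Fin n) K)
              ^ (r + 1 - t.val) := by
      rw [e1, e2]
      rw [show c * (X (⟨a, by omega⟩ : Fin n) ^ (r + 2) *
          (X (⟨a + 1, by omega⟩ : Fin n) ^ (r + 1) * R))
        = (c * R) * X (⟨a, by omega⟩ : Fin n) ^ (r + 1 + 1)
            * X (⟨a + 1, by omega⟩ : Fin n) ^ (r + 1) from by ring]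
      have : D (⟨a + (0 : Fin (r + 1 + 1)).val, by omega⟩ : Fin (n - 1))
          = D (⟨a, by omega⟩ : Fin (n - 1)) := by
        congr 1 <;> exact Fin.ext (by simp)
      rw [this, key]
      ring
    rw [hfirst]
    have IH := ih (a + 1) (by omega) (-(c * X (⟨a, by omega⟩ : Fin n) ^ (r + 1)))
      (by
        intro i j hi hj
        rw [map_neg, map_mul, map_pow, rename_X, hc i j (by omega) (by omega),
          Equiv.swap_apply_of_ne_of_ne]
        · intro hh
          rw [← hh] at hi
          exact absurd hi (by omega : ¬ a + 1 ≤ a)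
        · intro hh
          rw [← hh] at hj
          exact absurd hj (by omega : ¬ a + 1 ≤ a))
    have hfun : (fun (P : MvPolynomial (Fin n) K) (t : Fin (r + 1)) =>
        D (⟨a + (Fin.succ t).val, by have := t.isLt; omega⟩ : Fin (n - 1)) P)
        = fun P t => D (⟨a + 1 + t.val, by have := t.isLt; omega⟩ : Fin (n - 1)) P := by
      funext P t
      have hv : a + (Fin.succ t).val = a + 1 + t.val := by rw [Fin.val_succ]; omega
      congr 1
      first
      | exact hv
      | exact Fin.ext hv
    rw [show (-(c * X (⟨a, by omega⟩ : Fin n) ^ (r + 1)) *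
        ∏ t : Fin (r + 1),
          (X (⟨a + 1 + t.val, by have := t.isLt; omega⟩ : Fin n) : MvPolynomial (Fin n) K)
            ^ (r + 1 - t.val))
      = (-(c * X (⟨a, by omega⟩ : Fin n) ^ (r + 1))) *
        ∏ t : Fin (r + 1),
          (X (⟨a + 1 + t.val, by have := t.isLt; omega⟩ : Fin n) : MvPolynomial (Fin n) K)
            ^ (r + 1 - t.val) from rfl]
    calc (List.finRange (r + 1)).foldl
          (fun (P : MvPolynomial (Fin n) K) (t : Fin (r + 1)) =>
            D (⟨a + (Fin.succ t).val, by have := t.isLt; omega⟩ : Fin (n - 1)) P)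
          (-(c * X (⟨a, by omega⟩ : Fin n) ^ (r + 1)) *
            ∏ t : Fin (r + 1),
              (X (⟨a + 1 + t.val, by have := t.isLt; omega⟩ : Fin n) : MvPolynomial (Fin n) K)
                ^ (r + 1 - t.val))
        = (-1 : MvPolynomial (Fin n) K) ^ (r + 1) *
            (-(c * X (⟨a, by omega⟩ : Fin n) ^ (r + 1))) *
            ∏ t : Fin (r + 1),
              (X (⟨a + 1 + t.val, by have := t.isLt; omega⟩ : Fin n) : MvPolynomial (Fin n) K)
                ^ (r - t.val) := by rw [hfun]; exact IH
      _ = (-1 : MvPolynomial (Fin n) K) ^ (r + 1 + 1) * c *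
            ∏ t : Fin (r + 1 + 1),
              (X (⟨a + t.val, by have := t.isLt; omega⟩ : Fin n) : MvPolynomial (Fin n) K)
                ^ (r + 1 - t.val) := by
          have e3 : (∏ t : Fin (r + 1 + 1),
              (X (⟨a + t.val, by have := t.isLt; omega⟩ : Fin n) : MvPolynomial (Fin n) K)
                ^ (r + 1 - t.val))
              = X (⟨a, by omega⟩ : Fin n) ^ (r + 1) *
                ∏ t : Fin (r + 1),
                  (X (⟨a + 1 + t.val, by have := t.isLt; omega⟩ : Fin n) :
                    MvPolynomial (Fin n) K) ^ (r - t.val) := by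
            have := prod_shift (K := K) (n := n) (k := r + 1) (b := a) (e := r + 1) (by omega)
            convert this using 4 <;> omega
          rw [e3, pow_succ]
          ring

/-- For `1 ≤ m − r ≤ m < n` (one-based indexing of the variables
`x_1, …, x_n`), `∂_m ∂_{m-1} ⋯ ∂_{m-r}(x_{m-r}^{r+1} x_{m-r+1}^r ⋯ x_m^1)
 = (−1)^{r+1} x_{m-r}^r x_{m-r+1}^{r-1} ⋯ x_{m-1}^1`, where the fold applies `∂_{m-r}`
first, then `∂_{m-r+1}`, …, finally `∂_m`. -/
theorem demazure_staircase_shift {K : Type} [Field K] (n m r : ℕ)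
    (h1 : 1 ≤ m - r) (h2 : r ≤ m) (h3 : m < n)
    (D : Fin (n - 1) → MvPolynomial (Fin n) K → MvPolynomial (Fin n) K)
    (hD : IsDemazure D) :
    (List.finRange (r + 1)).foldl
      (fun P t => D (⟨m - r - 1 + t.val, by have := t.isLt; omega⟩ : Fin (n - 1)) P)
      (∏ t : Fin (r + 1),
        (X (⟨m - r - 1 + t.val, by have := t.isLt; omega⟩ : Fin n) : MvPolynomial (Fin n) K)
          ^ (r + 1 - t.val)) =
    (-1 : MvPolynomial (Fin n) K) ^ (r + 1) *
      ∏ t : Fin (r + 1),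
        (X (⟨m - r - 1 + t.val, by have := t.isLt; omega⟩ : Fin n) : MvPolynomial (Fin n) K)
          ^ (r - t.val) := by
  have key := demazure_aux hD r (m - r - 1) (by omega) 1 (fun i j _ _ => map_one _)
  rw [one_mul, mul_one] at key
  exact key
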